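/- Let d be a derivation of 𝐧₁ and write d(e₁) = Σ_{i=1}^{3t} α_i e_i. Then the coefficients α_{3k-1} vanish for all 1 ≤ k ≤ t. -/

import Mathlib

/-- Structure constants of `𝐧₁`. -/
def cc (i j : ℕ) : ℤ :=
  if ((i : ℤ) - j) % 3 = 1 then 1 else if ((i : ℤ) - j) % 3 = 2 then -1 else 0

private lemma sum_lie' {ι L : Type*} [LieRing L] (s : Finset ι) (f : ι → L) (y : L) :
    ⁅∑ i ∈ s, f i, y⁆ = ∑ i ∈ s, ⁅f i, y⁆ := by
  induction s using Finset.cons_induction with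
  | empty => simp
  | cons a s ha ih => simp [Finset.sum_cons, add_lie, ih]

private lemma lie_sum' {ι L : Type*} [LieRing L] (s : Finset ι) (f : ι → L) (y : L) :
    ⁅y, ∑ i ∈ s, f i⁆ = ∑ i ∈ s, ⁅y, f i⁆ := by
  induction s using Finset.cons_induction with
  | empty => simp
  | cons a s ha ih => simp [Finset.sum_cons, lie_add, ih]

/-- if `d` is a derivation of `𝐧₁` and `d(e₁) = Σ_{i=1}^{3t} α_i e_i`, then
`α_{3k-1} = 0` for all `1 ≤ k ≤ t`. -/
theorem statement7 (L : Type*) [LieRing L] [LieAlgebra ℂ L]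
    (b : Module.Basis {n : ℕ // 0 < n} ℂ L)
    (hbr : ∀ (i j : ℕ) (hi : 0 < i) (hj : 0 < j),
      ⁅b ⟨i, hi⟩, b ⟨j, hj⟩⁆ = (cc i j : ℂ) • b ⟨i + j, by omega⟩)
    (d : LieDerivation ℂ L L) (t : ℕ) (α : ℕ → ℂ)
    (h : d (b ⟨1, by omega⟩) =
      ∑ i ∈ Finset.range (3 * t), α (i + 1) • b ⟨i + 1, by omega⟩) :
    ∀ k : ℕ, 1 ≤ k → k ≤ t → α (3 * k - 1) = 0 := by
  intro k hk1 hkt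
  have h1 : (0:ℕ) < 1 := one_pos
  have h3 : (0:ℕ) < 3 := by omega
  have h4 : (0:ℕ) < 4 := by omega
  set e1 : L := b ⟨1, h1⟩ with he1
  set e3 : L := b ⟨3, h3⟩ with he3
  set e4 : L := b ⟨4, h4⟩ with he4
  set m : {n : ℕ // 0 < n} := ⟨3*k+3, by omega⟩ with hm
  set φ : L →ₗ[ℂ] ℂ := b.coord m with hφ
  have coord_b : ∀ (n : ℕ) (hn : 0 < n),
      φ (b ⟨n, hn⟩) = if n = 3*k+3 then 1 else 0 := by
    intro n hn
    simp [hφ, hm, Module.Basis.coord_apply, Module.Basis.repr_self, Finsupp.single_apply,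
      Subtype.ext_iff]
  have hc41 : cc 4 1 = 0 := by unfold cc; split_ifs <;> omega
  have h41 : ⁅e4, e1⁆ = (0:L) := by
    rw [he4, he1, hbr 4 1 h4 h1, hc41]; simp
  have hc13 : cc 1 3 = 1 := by unfold cc; split_ifs <;> omega
  have h13 : ⁅e1, e3⁆ = e4 := by
    rw [he1, he3, hbr 1 3 h1 h3, hc13]; simp [he4]
  have key : (0:L) = ⁅e4, d e1⁆ + (⁅⁅e1, d e3⁆, e1⁆ + ⁅⁅d e1, e3⁆, e1⁆) := by
    have hk := d.apply_lie_eq_add e4 e1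
    rw [h41, map_zero] at hk
    rw [hk]
    congr 1
    rw [← h13, d.apply_lie_eq_add, add_lie]
  have keyφ : (0:ℂ) = φ ⁅e4, d e1⁆ + (φ ⁅⁅e1, d e3⁆, e1⁆ + φ ⁅⁅d e1, e3⁆, e1⁆) := by
    have := congrArg φ key
    simpa only [map_zero, map_add] using this
  -- middle term vanishes
  have hmid : φ ⁅⁅e1, d e3⁆, e1⁆ = 0 := by
    set A : L →ₗ[ℂ] L := LieAlgebra.ad ℂ L e1 with hA
    have hzero : φ.comp (A.comp A) = 0 := by
      apply b.ext
      rintro ⟨j, hj⟩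
      simp only [LinearMap.comp_apply, hA, LieAlgebra.ad_apply, LinearMap.zero_apply]
      rw [he1, hbr 1 j h1 hj, lie_smul, hbr 1 (1+j) h1 (by omega), smul_smul,
        map_smul, coord_b]
      by_cases hcase : 1 + (1 + j) = 3*k+3
      · have hj' : j = 3*k+1 := by omega
        have : cc 1 j = 0 := by subst hj'; unfold cc; split_ifs <;> omega
        simp [this]
      · simp [hcase]
    have hlin : ⁅⁅e1, d e3⁆, e1⁆ = -(A.comp A (d e3)) := by
      rw [LinearMap.comp_apply, hA, LieAlgebra.ad_apply, LieAlgebra.ad_apply,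
        ← lie_skew]
    rw [hlin, map_neg]
    have := LinearMap.congr_fun hzero (d e3)
    rw [LinearMap.comp_apply] at this
    rw [this]
    exact neg_zero
  have hmem : 3*k-2 ∈ Finset.range (3*t) := by
    simp only [Finset.mem_range]; omega
  set A1 : ℂ := α (3*k-1) with hA1
  have hterm3 : φ ⁅e4, d e1⁆ = -A1 := by
    rw [h, lie_sum']
    have hr : ∀ i ∈ Finset.range (3*t), ⁅e4, α (i + 1) • b ⟨i + 1, by omega⟩⁆
        = α (i + 1) • ((cc 4 (i+1) : ℂ) • b ⟨4 + (i + 1), by omega⟩) := by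
      intro i _
      rw [lie_smul, he4, hbr 4 (i+1) h4 (by omega)]
    rw [Finset.sum_congr rfl hr, map_sum,
      Finset.sum_eq_single_of_mem (3*k-2) hmem]
    · have hi1 : 3*k-2+1 = 3*k-1 := by omega
      have hcc : cc 4 (3*k-1) = -1 := by unfold cc; split_ifs <;> omega
      have hidx : 4 + (3*k-2+1) = 3*k+3 := by omega
      rw [map_smul, map_smul, coord_b, if_pos hidx, hi1, hcc, hA1]
      norm_num
    · intro i _ hne
      rw [map_smul, map_smul, coord_b, if_neg (by omega)]
      simp
  have hterm1 : φ ⁅⁅d e1, e3⁆, e1⁆ = -A1 := by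
    rw [h, sum_lie', sum_lie']
    have hr : ∀ i ∈ Finset.range (3*t), ⁅⁅α (i + 1) • b ⟨i + 1, by omega⟩, e3⁆, e1⁆
        = α (i + 1) • ((cc (i+1) 3 : ℂ) •
            ((cc (i+1+3) 1 : ℂ) • b ⟨i+1+3+1, by omega⟩)) := by
      intro i _
      rw [smul_lie, he3, hbr (i+1) 3 (by omega) h3, smul_lie, smul_lie, he1,
        hbr (i+1+3) 1 (by omega) h1]
    rw [Finset.sum_congr rfl hr, map_sum,
      Finset.sum_eq_single_of_mem (3*k-2) hmem]
    · have hi1 : 3*k-2+1 = 3*k-1 := by omega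
      have hcc1 : cc (3*k-1) 3 = -1 := by unfold cc; split_ifs <;> omega
      have hcc2 : cc (3*k-1+3) 1 = 1 := by unfold cc; split_ifs <;> omega
      rw [map_smul, map_smul, map_smul, coord_b,
        if_pos (show 3*k-2+1+3+1 = 3*k+3 by omega), hi1, hcc1, hcc2, hA1]
      norm_num
    · intro i _ hne
      rw [map_smul, map_smul, map_smul, coord_b, if_neg (by omega)]
      simp
  rw [hterm1, hterm3, hmid] at keyφ
  have h2 : (2:ℂ) * A1 = 0 := by linear_combination keyφ
  rcases mul_eq_zero.mp h2 with h' | h'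
  · norm_num at h'
  · exact h'
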